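/- arXiv:2202.01298 — 3 statements merged into one kernel-verified Lean document; each statement's English description precedes it below -/
import Mathlib

section
/- Let Ω = {Z_1,…,Z_N} be a finite subset of V_nc with Z_i ∈ V^{n_i×n_i}, N₀ = ∑ n_i, Z^{(0)} = ⊕_{i=1}^N Z_i, and let S = {α ∈ ℂ^{N₀×N₀} : α Z^{(0)} = Z^{(0)} α} be the intertwining algebra. A graded kernel K on Ω with values in L(A_nc, L(Y)_nc) is a noncommutative kernel if and only if the associated map φ_K : A^{N₀×N₀} → L(Y^{N₀}) is an (S,S*)-bimodule map. Conversely, every (S,S*)-bimodule map φ : A^{N₀×N₀} → L(Y^{N₀}) equals φ_K for a uniquely determined noncommutative kernel K on Ω. -/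
open scoped ComplexOrder Matrix

noncomputable section

namespace NCK

/-! ## Actions of scalar complex matrices on matrices over a `ℂ`-module -/

/-- Left action `α · Z` of a complex scalar matrix on a matrix over a `ℂ`-module. -/
def cMul {p q r : Type*} [Fintype q] {M : Type*} [AddCommMonoid M] [Module ℂ M]
    (α : Matrix p q ℂ) (Z : Matrix q r M) : Matrix p r M :=
  Matrix.of fun i k => ∑ j, α i j • Z j k

/-- Right action `Z · α` of a complex scalar matrix on a matrix over a `ℂ`-module. -/
def mulC {p q r : Type*} [Fintype q] {M : Type*} [AddCommMonoid M] [Module ℂ M]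
    (Z : Matrix p q M) (α : Matrix q r ℂ) : Matrix p r M :=
  Matrix.of fun i k => ∑ j, α j k • Z i j

/-- The sandwich `α · P · βᴴ`. -/
def sandwich {p q p' q' : Type*} [Fintype p] [Fintype q] {M : Type*} [AddCommMonoid M]
    [Module ℂ M] (α : Matrix p' p ℂ) (P : Matrix p q M) (β : Matrix q' q ℂ) :
    Matrix p' q' M :=
  mulC (cMul α P) βᴴ

/-- A scalar complex matrix viewed as a matrix over the algebra `A`, i.e. `α ⊗ 1_A`. -/
def matC {p q : Type*} (A : Type*) [Semiring A] [Algebra ℂ A] (α : Matrix p q ℂ) :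
    Matrix p q A :=
  α.map (algebraMap ℂ A)

/-! ## Positivity and norm bounds for matrices over `*`-rings and for operator matrices -/

/-- Positivity of a square matrix over a `*`-ring, via factorization `Q = Cᴴ * C`
(the standard characterization of positivity in a matrix `C⋆`-algebra). -/
def MatPos {n : Type*} [Fintype n] {R : Type*} [NonUnitalSemiring R] [StarRing R]
    (Q : Matrix n n R) : Prop :=
  ∃ C : Matrix n n R, Q = Cᴴ * C

/-- `‖Q‖ ≤ c` for a matrix over a unital `*`-algebra, expressed as positivity of
`c² • 1 - Qᴴ * Q`. -/
def MatNormLe {n : Type*} [Fintype n] [DecidableEq n] {R : Type*} [Ring R] [StarRing R]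
    [Algebra ℂ R] (Q : Matrix n n R) (c : ℝ) : Prop :=
  MatPos ((((c : ℂ) ^ 2) • (1 : Matrix n n R)) - Qᴴ * Q)

/-- Positivity of an element of a `C⋆`-algebra, via factorization `x = (star c) * c`. -/
def elemPos {R : Type*} [Mul R] [Star R] (x : R) : Prop :=
  ∃ c : R, x = star c * c

variable {Y : Type*} [NormedAddCommGroup Y] [InnerProductSpace ℂ Y]

/-- Positivity of a square matrix of Hilbert-space operators, via the quadratic form. -/
def OpMatPos {n : Type*} [Fintype n] (T : Matrix n n (Y →L[ℂ] Y)) : Prop :=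
  ∀ y : n → Y, 0 ≤ ∑ i, ∑ j, (inner ℂ (y i) (T i j (y j)) : ℂ)

/-- Positivity of a doubly indexed (block) matrix of Hilbert-space operators. -/
def OpMatPos2 {k n : Type*} [Fintype k] [Fintype n]
    (T : Matrix k k (Matrix n n (Y →L[ℂ] Y))) : Prop :=
  ∀ y : k → n → Y, 0 ≤ ∑ i, ∑ j, ∑ a, ∑ b, (inner ℂ (y i a) (T i j a b (y j b)) : ℂ)

/-- `‖T‖ ≤ c` for a matrix of Hilbert-space operators. -/
def OpMatNormLe {p q : Type*} [Fintype p] [Fintype q]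
    (T : Matrix p q (Y →L[ℂ] Y)) (c : ℝ) : Prop :=
  ∀ y : q → Y, ∑ i, ‖∑ j, T i j (y j)‖ ^ 2 ≤ c ^ 2 * ∑ j, ‖y j‖ ^ 2

/-- `‖T‖ ≤ c` for a doubly indexed (block) matrix of Hilbert-space operators. -/
def OpMatNormLe2 {k n : Type*} [Fintype k] [Fintype n]
    (T : Matrix k k (Matrix n n (Y →L[ℂ] Y))) (c : ℝ) : Prop :=
  ∀ y : k → n → Y,
    ∑ i, ∑ a, ‖∑ j, ∑ b, T i j a b (y j b)‖ ^ 2 ≤ c ^ 2 * ∑ j, ∑ b, ‖y j b‖ ^ 2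

/-! ## Completely positive / completely bounded / bimodule maps on matrix algebras -/

/-- A map `φ : A^{ι×ι} → L(Y)^{ι×ι} (≅ L(Y^ι))` is completely positive if all its matrix
amplifications map positive elements to positive elements. -/
def IsCPMap {A : Type*} [NonUnitalSemiring A] [StarRing A] {ι : Type*} [Fintype ι]
    (φ : Matrix ι ι A → Matrix ι ι (Y →L[ℂ] Y)) : Prop :=
  ∀ (k : ℕ) (Q : Matrix (Fin k) (Fin k) (Matrix ι ι A)),
    MatPos Q → OpMatPos2 (Matrix.of fun i j => φ (Q i j))

/-- A map `φ : A^{ι×ι} → L(Y)^{ι×ι} (≅ L(Y^ι))` is completely bounded if the norms of its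
matrix amplifications are uniformly bounded. -/
def IsCBMap {A : Type*} [Ring A] [StarRing A] [Algebra ℂ A] {ι : Type*} [Fintype ι]
    [DecidableEq ι] (φ : Matrix ι ι A → Matrix ι ι (Y →L[ℂ] Y)) : Prop :=
  ∃ c : ℝ, ∀ (k : ℕ) (Q : Matrix (Fin k) (Fin k) (Matrix ι ι A)),
    MatNormLe Q 1 → OpMatNormLe2 (Matrix.of fun i j => φ (Q i j)) c

/-- `φ` is an `(S, S^*)`-bimodule map: `φ (α · P · β^*) = L_α (φ P) L_{β^*}` for `α, β ∈ S`. -/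
def IsBimod {ι : Type*} [Fintype ι] {A B : Type*} [AddCommMonoid A] [Module ℂ A]
    [AddCommMonoid B] [Module ℂ B] (S : Set (Matrix ι ι ℂ))
    (φ : Matrix ι ι A → Matrix ι ι B) : Prop :=
  ∀ α ∈ S, ∀ β ∈ S, ∀ P, φ (sandwich α P β) = sandwich α (φ P) β

/-! ## Noncommutative sets, functions and kernels -/

/-- A subset of the noncommutative space `V_nc`, given levelwise. -/
abbrev NCSet (V : Type*) := ∀ n : ℕ, Set (Matrix (Fin n) (Fin n) V)

/-- The type of graded kernels on all of `V_nc` with values in `L(A_nc, B_nc)`;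
a kernel "on `Ω`" is such a family, with all conditions imposed only at points of `Ω`. -/
abbrev KernelFam (V A B : Type*) :=
  ∀ n m : ℕ, Matrix (Fin n) (Fin n) V → Matrix (Fin m) (Fin m) V →
    (Matrix (Fin n) (Fin m) A → Matrix (Fin n) (Fin m) B)

/-- A graded kernel assigns a *linear* map `K(Z,W) : A^{n×m} → B^{n×m}` to points of `Ω`. -/
def GradedLinearOn {V A B : Type*} [AddCommMonoid A] [Module ℂ A] [AddCommMonoid B]
    [Module ℂ B] (Ω : NCSet V) (K : KernelFam V A B) : Prop :=
  ∀ n m Z W, Z ∈ Ω n → W ∈ Ω m → IsLinearMap ℂ (K n m Z W)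

/-- `K` respects intertwinings at points of `Ω`: whenever `α Z = Z' α` and `β W = W' β`,
`α K(Z,W)(P) β^* = K(Z',W')(α P β^*)`. -/
def IsNCKernelOn {V : Type*} [AddCommMonoid V] [Module ℂ V] {A B : Type*}
    [AddCommMonoid A] [Module ℂ A] [AddCommMonoid B] [Module ℂ B]
    (Ω : NCSet V) (K : KernelFam V A B) : Prop :=
  ∀ (n n' m m' : ℕ) (Z : Matrix (Fin n) (Fin n) V) (Z' : Matrix (Fin n') (Fin n') V)
    (W : Matrix (Fin m) (Fin m) V) (W' : Matrix (Fin m') (Fin m') V),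
    Z ∈ Ω n → Z' ∈ Ω n' → W ∈ Ω m → W' ∈ Ω m' →
    ∀ (α : Matrix (Fin n') (Fin n) ℂ) (β : Matrix (Fin m') (Fin m) ℂ),
      cMul α Z = mulC Z' α → cMul β W = mulC W' β →
      ∀ P, sandwich α (K n m Z W P) β = K n' m' Z' W' (sandwich α P β)

/-- `K` is Hermitian on `Ω`: `K(W,Z)(P^*) = (K(Z,W)(P))^*`. -/
def IsHermitianOn {V A B : Type*} [Star A] [Star B] (Ω : NCSet V) (K : KernelFam V A B) :
    Prop :=
  ∀ n m Z W, Z ∈ Ω n → W ∈ Ω m → ∀ P : Matrix (Fin n) (Fin m) A,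
    K m n W Z Pᴴ = (K n m Z W P)ᴴ

/-- The complete positivity condition for a kernel with values in `L(A_nc, L(Y)_nc)`,
in the Hilbert-space (quadratic form) formulation. -/
def IsCPOnH {V : Type*} {A : Type*} [NonUnitalSemiring A] [StarRing A]
    (Ω : NCSet V) (K : KernelFam V A (Y →L[ℂ] Y)) : Prop :=
  ∀ (L : ℕ) (ns : Fin L → ℕ) (Z : ∀ l, Matrix (Fin (ns l)) (Fin (ns l)) V),
    (∀ l, Z l ∈ Ω (ns l)) →
    ∀ (P : ∀ l, Matrix (Fin (ns l)) (Fin 1) A) (y : ∀ l, Fin (ns l) → Y),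
      0 ≤ ∑ l, ∑ l', ∑ a, ∑ b,
        (inner ℂ (y l a) (K (ns l) (ns l') (Z l) (Z l') (P l * (P l')ᴴ) a b (y l' b)) : ℂ)

/-- The complete positivity condition for a kernel with values in `L(A_nc, B_nc)`,
`B` a `C⋆`-algebra, in the `C⋆`-algebraic formulation. -/
def IsCPOnC {V : Type*} {A B : Type*} [NonUnitalSemiring A] [StarRing A]
    [NonUnitalSemiring B] [StarRing B] (Ω : NCSet V) (K : KernelFam V A B) : Prop :=
  ∀ (L : ℕ) (ns : Fin L → ℕ) (Z : ∀ l, Matrix (Fin (ns l)) (Fin (ns l)) V),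
    (∀ l, Z l ∈ Ω (ns l)) →
    ∀ (a : ∀ l, Matrix (Fin (ns l)) (Fin 1) A) (b : ∀ l, Matrix (Fin (ns l)) (Fin 1) B),
      elemPos (∑ l, ∑ l',
        ((b l)ᴴ * (K (ns l) (ns l') (Z l) (Z l') (a l * (a l')ᴴ)) * b l') 0 0)

/-- Completely positive noncommutative kernel on `Ω` (Hilbert-space-valued version). -/
def IsCPNCKernelOnH {V : Type*} [AddCommMonoid V] [Module ℂ V] {A : Type*}
    [NonUnitalSemiring A] [StarRing A] [Module ℂ A] (Ω : NCSet V)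
    (K : KernelFam V A (Y →L[ℂ] Y)) : Prop :=
  GradedLinearOn Ω K ∧ IsNCKernelOn Ω K ∧ IsCPOnH Ω K

/-- Completely positive noncommutative kernel on `Ω` (`C⋆`-algebra-valued version). -/
def IsCPNCKernelOnC {V : Type*} [AddCommMonoid V] [Module ℂ V] {A B : Type*}
    [NonUnitalSemiring A] [StarRing A] [Module ℂ A]
    [NonUnitalSemiring B] [StarRing B] [Module ℂ B] (Ω : NCSet V)
    (K : KernelFam V A B) : Prop :=
  GradedLinearOn Ω K ∧ IsNCKernelOn Ω K ∧ IsCPOnC Ω K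

/-- Noncommutative function `H` on `Ω` with values in `W_nc`:
graded, and `Z α = α Z'` implies `H(Z) (α ⊗ 1) = (α ⊗ 1) H(Z')`. -/
def IsNCFunOn {V W : Type*} [AddCommMonoid V] [Module ℂ V] [AddCommMonoid W] [Module ℂ W]
    (Ω : NCSet V) (H : ∀ n, Matrix (Fin n) (Fin n) V → Matrix (Fin n) (Fin n) W) : Prop :=
  ∀ (n m : ℕ) (Z : Matrix (Fin n) (Fin n) V) (Z' : Matrix (Fin m) (Fin m) V),
    Z ∈ Ω n → Z' ∈ Ω m → ∀ α : Matrix (Fin n) (Fin m) ℂ,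
      mulC Z α = cMul α Z' → mulC (H n Z) α = cMul α (H m Z')

/-! ## Kernels on a finite (indexed) set of points -/

/-- Kernels on a finite set of points `Z i`, `i : Fin Np`, of sizes `d i`. -/
abbrev KernelIx {Np : ℕ} (d : Fin Np → ℕ) (A B : Type*) :=
  ∀ i j : Fin Np, Matrix (Fin (d i)) (Fin (d j)) A → Matrix (Fin (d i)) (Fin (d j)) B

/-- Each value `K(Z_i, Z_j)` is a linear map. -/
def GradedLinearIx {Np : ℕ} {d : Fin Np → ℕ} {A B : Type*} [AddCommMonoid A] [Module ℂ A]
    [AddCommMonoid B] [Module ℂ B] (K : KernelIx d A B) : Prop :=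
  ∀ i j, IsLinearMap ℂ (K i j)

/-- The respects-intertwinings condition for a kernel on the finite set of points `Z`. -/
def IsNCKernelIx {V : Type*} [AddCommMonoid V] [Module ℂ V] {Np : ℕ} {d : Fin Np → ℕ}
    {A B : Type*} [AddCommMonoid A] [Module ℂ A] [AddCommMonoid B] [Module ℂ B]
    (Z : ∀ i, Matrix (Fin (d i)) (Fin (d i)) V) (K : KernelIx d A B) : Prop :=
  ∀ (i i' j j' : Fin Np) (α : Matrix (Fin (d i')) (Fin (d i)) ℂ)
    (β : Matrix (Fin (d j')) (Fin (d j)) ℂ),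
    cMul α (Z i) = mulC (Z i') α → cMul β (Z j) = mulC (Z j') β →
    ∀ P, sandwich α (K i j P) β = K i' j' (sandwich α P β)

/-- `K(Z_j, Z_i)(P^*) = (K(Z_i, Z_j)(P))^*`. -/
def IsHermitianIx {Np : ℕ} {d : Fin Np → ℕ} {A B : Type*} [Star A] [Star B]
    (K : KernelIx d A B) : Prop :=
  ∀ i j (P : Matrix (Fin (d i)) (Fin (d j)) A), K j i Pᴴ = (K i j P)ᴴ

/-- Complete positivity condition, Hilbert-space version, finite set of points. -/
def IsCPIxH {Np : ℕ} {d : Fin Np → ℕ} {A : Type*} [NonUnitalSemiring A] [StarRing A]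
    (K : KernelIx d A (Y →L[ℂ] Y)) : Prop :=
  ∀ (L : ℕ) (f : Fin L → Fin Np) (P : ∀ l, Matrix (Fin (d (f l))) (Fin 1) A)
    (y : ∀ l, Fin (d (f l)) → Y),
    0 ≤ ∑ l, ∑ l', ∑ a, ∑ b,
      (inner ℂ (y l a) (K (f l) (f l') (P l * (P l')ᴴ) a b (y l' b)) : ℂ)

/-- Complete positivity condition, `C⋆`-algebraic version, finite set of points. -/
def IsCPIxC {Np : ℕ} {d : Fin Np → ℕ} {A B : Type*} [NonUnitalSemiring A] [StarRing A]
    [NonUnitalSemiring B] [StarRing B] (K : KernelIx d A B) : Prop :=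
  ∀ (L : ℕ) (f : Fin L → Fin Np) (a : ∀ l, Matrix (Fin (d (f l))) (Fin 1) A)
    (b : ∀ l, Matrix (Fin (d (f l))) (Fin 1) B),
    elemPos (∑ l, ∑ l', ((b l)ᴴ * (K (f l) (f l') (a l * (a l')ᴴ)) * b l') 0 0)

/-- Completely positive nc kernel on a finite set of points (Hilbert version). -/
def IsCPNCKernelIxH {V : Type*} [AddCommMonoid V] [Module ℂ V] {Np : ℕ} {d : Fin Np → ℕ}
    {A : Type*} [NonUnitalSemiring A] [StarRing A] [Module ℂ A]
    (Z : ∀ i, Matrix (Fin (d i)) (Fin (d i)) V) (K : KernelIx d A (Y →L[ℂ] Y)) : Prop :=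
  GradedLinearIx K ∧ IsNCKernelIx Z K ∧ IsCPIxH K

/-- Completely positive nc kernel on a finite set of points (`C⋆` version). -/
def IsCPNCKernelIxC {V : Type*} [AddCommMonoid V] [Module ℂ V] {Np : ℕ} {d : Fin Np → ℕ}
    {A B : Type*} [NonUnitalSemiring A] [StarRing A] [Module ℂ A]
    [NonUnitalSemiring B] [StarRing B] [Module ℂ B]
    (Z : ∀ i, Matrix (Fin (d i)) (Fin (d i)) V) (K : KernelIx d A B) : Prop :=
  GradedLinearIx K ∧ IsNCKernelIx Z K ∧ IsCPIxC K

/-! ## The block-matrix encoding of a kernel on a finite set of points -/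

/-- The block index set for the direct sum point `Z^{(0)} = ⊕ᵢ Z_i`. -/
abbrev BIx {Np : ℕ} (d : Fin Np → ℕ) : Type := Σ i : Fin Np, Fin (d i)

/-- The direct sum `Z^{(0)} = ⊕ᵢ Z_i` of a finite family of nc points. -/
def dirSum {V : Type*} [Zero V] {Np : ℕ} {d : Fin Np → ℕ}
    (Z : ∀ i, Matrix (Fin (d i)) (Fin (d i)) V) : Matrix (BIx d) (BIx d) V :=
  Matrix.of fun x y =>
    if h : x.1 = y.1 then Z x.1 x.2 (Fin.cast (congrArg d h.symm) y.2) else 0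

/-- The intertwining algebra `S = {α : α Z^{(0)} = Z^{(0)} α}` of the direct-sum point. -/
def interAlg {V : Type*} [AddCommMonoid V] [Module ℂ V] {Np : ℕ} {d : Fin Np → ℕ}
    (Z : ∀ i, Matrix (Fin (d i)) (Fin (d i)) V) : Set (Matrix (BIx d) (BIx d) ℂ) :=
  {α | cMul α (dirSum Z) = mulC (dirSum Z) α}

/-- The block map `φ_K ([P_{ij}]) = [K(Z_i,Z_j)(P_{ij})]` associated with a kernel on a
finite set of points. -/
def phiK {Np : ℕ} {d : Fin Np → ℕ} {A B : Type*} (K : KernelIx d A B) :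
    Matrix (BIx d) (BIx d) A → Matrix (BIx d) (BIx d) B :=
  fun P => Matrix.of fun x y =>
    K x.1 y.1 (Matrix.of fun a b => P ⟨x.1, a⟩ ⟨y.1, b⟩) x.2 y.2

/-- The block map associated with a kernel and a finite tuple `f` of (indices of) points. -/
def phiKt {Np : ℕ} {d : Fin Np → ℕ} {A B : Type*} {L : ℕ} (f : Fin L → Fin Np)
    (K : KernelIx d A B) :
    Matrix (Σ l, Fin (d (f l))) (Σ l, Fin (d (f l))) A →
      Matrix (Σ l, Fin (d (f l))) (Σ l, Fin (d (f l))) B :=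
  fun P => Matrix.of fun x y =>
    K (f x.1) (f y.1) (Matrix.of fun a b => P ⟨x.1, a⟩ ⟨y.1, b⟩) x.2 y.2

/-- The block map associated with a general kernel and a finite tuple of points. -/
def phiKg {V A B : Type*} (K : KernelFam V A B) {L : ℕ} (ns : Fin L → ℕ)
    (Z : ∀ l, Matrix (Fin (ns l)) (Fin (ns l)) V) :
    Matrix (Σ l, Fin (ns l)) (Σ l, Fin (ns l)) A →
      Matrix (Σ l, Fin (ns l)) (Σ l, Fin (ns l)) B :=
  fun P => Matrix.of fun x y =>
    K (ns x.1) (ns y.1) (Z x.1) (Z y.1) (Matrix.of fun a b => P ⟨x.1, a⟩ ⟨y.1, b⟩) x.2 y.2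

/-! ## Full nc sets and envelopes -/

/-- Direct sum of two nc points. -/
def dsum2 {V : Type*} [Zero V] {n m : ℕ} (Z : Matrix (Fin n) (Fin n) V)
    (W : Matrix (Fin m) (Fin m) V) : Matrix (Fin (n + m)) (Fin (n + m)) V :=
  Matrix.of fun i j =>
    Sum.elim
      (fun a => Sum.elim (fun b => Z a b) (fun _ => (0 : V)) (finSumFinEquiv.symm j))
      (fun a => Sum.elim (fun _ => (0 : V)) (fun b => W a b) (finSumFinEquiv.symm j))
      (finSumFinEquiv.symm i)

/-- A full nc set: closed under direct sums and invariant under left injective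
intertwinings. -/
def IsFullNC {V : Type*} [AddCommMonoid V] [Module ℂ V] (Ξ : NCSet V) : Prop :=
  (∀ (n m : ℕ) (Z : Matrix (Fin n) (Fin n) V) (W : Matrix (Fin m) (Fin m) V),
      Z ∈ Ξ n → W ∈ Ξ m → dsum2 Z W ∈ Ξ (n + m)) ∧
  (∀ (n m : ℕ) (Z : Matrix (Fin n) (Fin n) V) (Z' : Matrix (Fin m) (Fin m) V)
      (ι : Matrix (Fin n) (Fin m) ℂ), Z ∈ Ξ n → Function.Injective ι.mulVec →
      cMul ι Z' = mulC Z ι → Z' ∈ Ξ m)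

/-- The full nc envelope of a subset `Ω` of `V_nc`. -/
def fullEnvelope {V : Type*} [AddCommMonoid V] [Module ℂ V] (Ω : NCSet V) : NCSet V :=
  fun n => {Z | ∀ Ξ : NCSet V, IsFullNC Ξ → (∀ k, Ω k ⊆ Ξ k) → Z ∈ Ξ n}

/-! ## 2×2 operator blocks -/

/-- A `2 × 2` matrix of operators on `Y`, as an operator on `Y ⊕ Y` (ℓ²-sum). -/
def blk2 (T : Matrix (Fin 2) (Fin 2) (Y →L[ℂ] Y)) :
    (PiLp 2 fun _ : Fin 2 => Y) →L[ℂ] (PiLp 2 fun _ : Fin 2 => Y) :=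
  ((PiLp.continuousLinearEquiv 2 ℂ (fun _ : Fin 2 => Y)).symm.toContinuousLinearMap) ∘L
    ((ContinuousLinearMap.pi fun i => ∑ j, (T i j) ∘L (ContinuousLinearMap.proj j)) ∘L
      ((PiLp.continuousLinearEquiv 2 ℂ (fun _ : Fin 2 => Y)).toContinuousLinearMap))


/-- Complete positivity for a map `φ : A → L(Y)` defined on a `C⋆`-algebra `A`. -/
def IsCPMapE {A : Type*} [NonUnitalSemiring A] [StarRing A] (φ : A → (Y →L[ℂ] Y)) : Prop :=
  ∀ (k : ℕ) (Q : Matrix (Fin k) (Fin k) A), MatPos Q →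
    OpMatPos (Matrix.of fun i j => φ (Q i j))

/-- Complete boundedness for a map `φ : A → L(Y)` defined on a `C⋆`-algebra `A`. -/
def IsCBMapE {A : Type*} [Ring A] [StarRing A] [Algebra ℂ A] (φ : A → (Y →L[ℂ] Y)) : Prop :=
  ∃ c : ℝ, ∀ (k : ℕ) (Q : Matrix (Fin k) (Fin k) A),
    MatNormLe Q 1 → OpMatNormLe (Matrix.of fun i j => φ (Q i j)) c

/-- The strict positivity domain `ℙ_𝔔 = {Z ∈ Ξ : 𝔔(Z,Z)(I) ≻ 0}` of a kernel `𝔔` on `Ξ`. -/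
def posDom {V : Type*} {N : Type*} [NormedAddCommGroup N] [InnerProductSpace ℂ N]
    [CompleteSpace N] (Ξ : NCSet V) (Q : KernelFam V ℂ (N →L[ℂ] N)) : NCSet V :=
  fun n => {Z | Z ∈ Ξ n ∧ ∃ ε : ℝ, 0 < ε ∧
    MatPos (Q n n Z Z 1 - (ε : ℂ) • (1 : Matrix (Fin n) (Fin n) (N →L[ℂ] N)))}

section Helpers

variable {Np : ℕ} {d : Fin Np → ℕ}

/-- Embedding of a small matrix as the `(i,j)` block of a `BIx`-indexed matrix. -/
def emb {M : Type*} [Zero M] (i j : Fin Np)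
    (P : Matrix (Fin (d i)) (Fin (d j)) M) : Matrix (BIx d) (BIx d) M :=
  Matrix.of fun x y =>
    if h : x.1 = i ∧ y.1 = j then
      P (Fin.cast (congrArg d h.1) x.2) (Fin.cast (congrArg d h.2) y.2) else 0

/-- The `(i,j)` block of a `BIx`-indexed matrix. -/
def blkOf {M : Type*} (i j : Fin Np) (P : Matrix (BIx d) (BIx d) M) :
    Matrix (Fin (d i)) (Fin (d j)) M :=
  Matrix.of fun a b => P ⟨i, a⟩ ⟨j, b⟩

lemma emb_apply {M : Type*} [Zero M] (i j : Fin Np)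
    (P : Matrix (Fin (d i)) (Fin (d j)) M) (a : Fin (d i)) (b : Fin (d j)) :
    emb i j P ⟨i, a⟩ ⟨j, b⟩ = P a b := by
  simp [emb]

lemma emb_apply_ne_left {M : Type*} [Zero M] {i j : Fin Np}
    {P : Matrix (Fin (d i)) (Fin (d j)) M} {x y : BIx d} (h : x.1 ≠ i) :
    emb i j P x y = 0 := by
  simp only [emb, Matrix.of_apply]
  rw [dif_neg (fun hc => h hc.1)]

lemma emb_apply_ne_right {M : Type*} [Zero M] {i j : Fin Np}
    {P : Matrix (Fin (d i)) (Fin (d j)) M} {x y : BIx d} (h : y.1 ≠ j) :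
    emb i j P x y = 0 := by
  simp only [emb, Matrix.of_apply]
  rw [dif_neg (fun hc => h hc.2)]

lemma blkOf_emb {M : Type*} [Zero M] (i j : Fin Np)
    (P : Matrix (Fin (d i)) (Fin (d j)) M) : blkOf i j (emb i j P) = P := by
  ext a b; exact emb_apply i j P a b

lemma sum_restrict {β : Type*} [AddCommMonoid β] (i : Fin Np) (f : BIx d → β)
    (h0 : ∀ u : BIx d, u.1 ≠ i → f u = 0) :
    ∑ u : BIx d, f u = ∑ a : Fin (d i), f ⟨i, a⟩ := by
  rw [← Finset.univ_sigma_univ, Finset.sum_sigma]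
  exact Finset.sum_eq_single i
    (fun k _ hk => Finset.sum_eq_zero fun c _ => h0 ⟨k, c⟩ hk) (by simp)

lemma cMul_apply {p q r : Type*} [Fintype q] {M : Type*} [AddCommMonoid M] [Module ℂ M]
    (α : Matrix p q ℂ) (Z : Matrix q r M) (i : p) (k : r) :
    cMul α Z i k = ∑ j, α i j • Z j k := rfl

lemma mulC_apply {p q r : Type*} [Fintype q] {M : Type*} [AddCommMonoid M] [Module ℂ M]
    (Z : Matrix p q M) (α : Matrix q r ℂ) (i : p) (k : r) :
    mulC Z α i k = ∑ j, α j k • Z i j := rfl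

lemma sandwich_apply {p q p' q' : Type*} [Fintype p] [Fintype q] {M : Type*}
    [AddCommMonoid M] [Module ℂ M] (α : Matrix p' p ℂ) (P : Matrix p q M)
    (β : Matrix q' q ℂ) (x : p') (y : q') :
    sandwich α P β x y = ∑ v, ∑ u, star (β y v) • α x u • P u v := by
  simp only [sandwich, mulC_apply, cMul_apply, Matrix.conjTranspose_apply,
    Finset.smul_sum]

lemma dirSum_apply_same {V : Type*} [Zero V] (Z : ∀ i, Matrix (Fin (d i)) (Fin (d i)) V)
    (i : Fin Np) (a b : Fin (d i)) : dirSum Z ⟨i, a⟩ ⟨i, b⟩ = Z i a b := by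
  simp [dirSum]

lemma dirSum_apply_ne {V : Type*} [Zero V] (Z : ∀ i, Matrix (Fin (d i)) (Fin (d i)) V)
    {x y : BIx d} (h : x.1 ≠ y.1) : dirSum Z x y = 0 := by
  simp [dirSum, h]

/-- The central computation: sandwiching with embedded scalar matrices. -/
lemma sandwich_emb {M : Type*} [AddCommMonoid M] [Module ℂ M] (i i' j j' : Fin Np)
    (α : Matrix (Fin (d i')) (Fin (d i)) ℂ) (β : Matrix (Fin (d j')) (Fin (d j)) ℂ)
    (P : Matrix (BIx d) (BIx d) M) :
    sandwich (emb i' i α) P (emb j' j β) =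
      emb i' j' (sandwich α (blkOf i j P) β) := by
  ext x y
  rw [sandwich_apply]
  by_cases hx : x.1 = i'
  · by_cases hy : y.1 = j'
    · obtain ⟨x1, a⟩ := x
      obtain ⟨y1, b⟩ := y
      obtain rfl : i' = x1 := hx.symm
      obtain rfl : j' = y1 := hy.symm
      rw [emb_apply, sandwich_apply]
      rw [sum_restrict (i := j) (f := fun v => ∑ u, star (emb j' j β ⟨j', b⟩ v) • emb i' i α ⟨i', a⟩ u • P u v)
        (fun v hv => by
          beta_reduce
          rw [emb_apply_ne_right (j := j) hv]
          simp)]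
      refine Finset.sum_congr rfl fun b' _ => ?_
      rw [sum_restrict (i := i) (f := fun u => star (emb j' j β ⟨j', b⟩ ⟨j, b'⟩) • emb i' i α ⟨i', a⟩ u • P u ⟨j, b'⟩)
        (fun u hu => by
          beta_reduce
          rw [emb_apply_ne_right (j := i) hu]
          simp)]
      refine Finset.sum_congr rfl fun a' _ => ?_
      rw [emb_apply, emb_apply]
      rfl
    · have hz : emb i' j' (sandwich α (blkOf i j P) β) x y = 0 := emb_apply_ne_right hy
      rw [hz]
      refine Finset.sum_eq_zero fun v _ => Finset.sum_eq_zero fun u _ => ?_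
      have h1 : emb j' j β y v = 0 := emb_apply_ne_left hy
      rw [h1]
      simp
  · have hz : emb i' j' (sandwich α (blkOf i j P) β) x y = 0 := emb_apply_ne_left hx
    rw [hz]
    refine Finset.sum_eq_zero fun v _ => Finset.sum_eq_zero fun u _ => ?_
    have h1 : emb i' i α x u = 0 := emb_apply_ne_left hx
    rw [h1]
    simp

end Helpers

section Helpers2

variable {Np : ℕ} {d : Fin Np → ℕ}

lemma sum_sigma_all {β : Type*} [AddCommMonoid β] (g : BIx d → β) :
    ∑ u : BIx d, g u = ∑ k, ∑ c : Fin (d k), g ⟨k, c⟩ := by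
  rw [← Finset.univ_sigma_univ, Finset.sum_sigma]

lemma emb_mem_interAlg {V : Type*} [AddCommMonoid V] [Module ℂ V]
    (Z : ∀ i, Matrix (Fin (d i)) (Fin (d i)) V) {i i' : Fin Np}
    (α : Matrix (Fin (d i')) (Fin (d i)) ℂ)
    (h : cMul α (Z i) = mulC (Z i') α) : emb i' i α ∈ interAlg Z := by
  show cMul (emb i' i α) (dirSum Z) = mulC (dirSum Z) (emb i' i α)
  ext x y
  rw [cMul_apply, mulC_apply]
  by_cases hx : x.1 = i'
  · by_cases hy : y.1 = i
    · obtain ⟨x1, a⟩ := x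
      obtain ⟨y1, b⟩ := y
      obtain rfl : i' = x1 := hx.symm
      obtain rfl : i = y1 := hy.symm
      rw [sum_restrict (i := i) (f := fun u => emb i' i α ⟨i', a⟩ u • dirSum Z u ⟨i, b⟩)
        (fun u hu => by beta_reduce; rw [emb_apply_ne_right hu, zero_smul])]
      rw [sum_restrict (i := i') (f := fun u => emb i' i α u ⟨i, b⟩ • dirSum Z ⟨i', a⟩ u)
        (fun u hu => by beta_reduce; rw [emb_apply_ne_left hu, zero_smul])]
      have h' := congrFun (congrFun h a) b
      rw [cMul_apply, mulC_apply] at h'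
      calc ∑ c, emb i' i α ⟨i', a⟩ ⟨i, c⟩ • dirSum Z ⟨i, c⟩ ⟨i, b⟩
          = ∑ c, α a c • Z i c b := by
            refine Finset.sum_congr rfl fun c _ => ?_
            rw [emb_apply, dirSum_apply_same]
        _ = ∑ c, α c b • Z i' a c := h'
        _ = ∑ c, emb i' i α ⟨i', c⟩ ⟨i, b⟩ • dirSum Z ⟨i', a⟩ ⟨i', c⟩ := by
            refine Finset.sum_congr rfl fun c _ => ?_
            rw [emb_apply, dirSum_apply_same]
    · trans (0 : V)
      · refine Finset.sum_eq_zero fun u _ => ?_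
        by_cases hu : u.1 = i
        · rw [dirSum_apply_ne Z (x := u) (y := y) (fun he => hy (he ▸ hu)), smul_zero]
        · rw [emb_apply_ne_right hu, zero_smul]
      · symm
        refine Finset.sum_eq_zero fun u _ => ?_
        rw [emb_apply_ne_right hy, zero_smul]
  · trans (0 : V)
    · refine Finset.sum_eq_zero fun u _ => ?_
      rw [emb_apply_ne_left hx, zero_smul]
    · symm
      refine Finset.sum_eq_zero fun u _ => ?_
      by_cases hu : u.1 = i'
      · rw [dirSum_apply_ne Z (x := x) (y := u) (fun he => hx (he.trans hu)), smul_zero]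
      · rw [emb_apply_ne_left hu, zero_smul]

lemma blk_intertwine {V : Type*} [AddCommMonoid V] [Module ℂ V]
    (Z : ∀ i, Matrix (Fin (d i)) (Fin (d i)) V) {α : Matrix (BIx d) (BIx d) ℂ}
    (hα : α ∈ interAlg Z) (k k' : Fin Np) :
    cMul (blkOf k k' α) (Z k') = mulC (Z k) (blkOf k k' α) := by
  have hα' : cMul α (dirSum Z) = mulC (dirSum Z) α := hα
  ext a b
  have h := congrFun (congrFun hα' ⟨k, a⟩) ⟨k', b⟩
  rw [cMul_apply, mulC_apply] at h
  rw [sum_restrict (i := k') (f := fun u => α ⟨k, a⟩ u • dirSum Z u ⟨k', b⟩)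
      (fun u hu => by
        beta_reduce
        rw [dirSum_apply_ne Z (x := u) (y := ⟨k', b⟩) hu, smul_zero])] at h
  rw [sum_restrict (i := k) (f := fun u => α u ⟨k', b⟩ • dirSum Z ⟨k, a⟩ u)
      (fun u hu => by
        beta_reduce
        rw [dirSum_apply_ne Z (x := ⟨k, a⟩) (y := u) (fun he => hu he.symm), smul_zero])] at h
  rw [cMul_apply, mulC_apply]
  simp only [dirSum_apply_same] at h
  simp only [blkOf, Matrix.of_apply]
  exact h

lemma sandwich_dec {M : Type*} [AddCommMonoid M] [Module ℂ M]
    (α β : Matrix (BIx d) (BIx d) ℂ) (P : Matrix (BIx d) (BIx d) M) (i j : Fin Np) :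
    blkOf i j (sandwich α P β) =
      ∑ i', ∑ j', sandwich (blkOf i i' α) (blkOf i' j' P) (blkOf j j' β) := by
  ext a b
  show sandwich α P β ⟨i, a⟩ ⟨j, b⟩ = _
  rw [sandwich_apply]
  simp only [sum_sigma_all]
  refine Eq.trans (Finset.sum_congr rfl fun j' _ => Finset.sum_comm)
    (Eq.trans Finset.sum_comm ?_)
  simp only [Matrix.sum_apply, sandwich_apply, blkOf, Matrix.of_apply]

lemma cMul_one {p r : Type*} [Fintype p] [DecidableEq p] {M : Type*} [AddCommMonoid M]
    [Module ℂ M] (Z : Matrix p r M) : cMul (1 : Matrix p p ℂ) Z = Z := by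
  ext i k
  rw [cMul_apply]
  simp [Matrix.one_apply, ite_smul]

lemma mulC_one {p r : Type*} [Fintype r] [DecidableEq r] {M : Type*} [AddCommMonoid M]
    [Module ℂ M] (Z : Matrix p r M) : mulC Z (1 : Matrix r r ℂ) = Z := by
  ext i k
  rw [mulC_apply]
  simp [Matrix.one_apply, ite_smul]

lemma sandwich_one_one {p q : Type*} [Fintype p] [Fintype q] [DecidableEq p]
    [DecidableEq q] {M : Type*} [AddCommMonoid M] [Module ℂ M] (P : Matrix p q M) :
    sandwich (1 : Matrix p p ℂ) P (1 : Matrix q q ℂ) = P := by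
  rw [sandwich, Matrix.conjTranspose_one, cMul_one, mulC_one]

lemma proj_mem {V : Type*} [AddCommMonoid V] [Module ℂ V]
    (Z : ∀ i, Matrix (Fin (d i)) (Fin (d i)) V) (i : Fin Np) :
    emb i i (1 : Matrix (Fin (d i)) (Fin (d i)) ℂ) ∈ interAlg Z :=
  emb_mem_interAlg Z 1 (by rw [cMul_one, mulC_one])

lemma blkOf_phiK {A B : Type*} (K : KernelIx d A B) (i j : Fin Np)
    (P : Matrix (BIx d) (BIx d) A) :
    blkOf i j (phiK K P) = K i j (blkOf i j P) := rfl

lemma phiK_emb {A B : Type*} [Zero A] (K : KernelIx d A B) (i j : Fin Np)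
    (Q : Matrix (Fin (d i)) (Fin (d j)) A) (a : Fin (d i)) (b : Fin (d j)) :
    phiK K (emb i j Q) ⟨i, a⟩ ⟨j, b⟩ = K i j Q a b := by
  show K i j (blkOf i j (emb i j Q)) a b = K i j Q a b
  rw [blkOf_emb]

lemma emb_add {M : Type*} [AddCommMonoid M] (i j : Fin Np)
    (P Q : Matrix (Fin (d i)) (Fin (d j)) M) :
    emb i j (P + Q) = emb i j P + emb i j Q := by
  ext x y
  by_cases h : x.1 = i ∧ y.1 = j <;> simp [emb, h]

lemma emb_smul {M : Type*} [AddCommMonoid M] [Module ℂ M] (i j : Fin Np) (c : ℂ)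
    (P : Matrix (Fin (d i)) (Fin (d j)) M) :
    emb i j (c • P) = c • emb i j P := by
  ext x y
  by_cases h : x.1 = i ∧ y.1 = j <;> simp [emb, h]

lemma blkOf_add {M : Type*} [AddCommMonoid M] (i j : Fin Np)
    (P Q : Matrix (BIx d) (BIx d) M) :
    blkOf i j (P + Q) = blkOf i j P + blkOf i j Q := by
  ext a b; simp [blkOf]

lemma blkOf_smul {M : Type*} [AddCommMonoid M] [Module ℂ M] (i j : Fin Np) (c : ℂ)
    (P : Matrix (BIx d) (BIx d) M) :
    blkOf i j (c • P) = c • blkOf i j P := by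
  ext a b; simp [blkOf]

lemma map_sum_sum {M N : Type*} [AddCommMonoid M] [Module ℂ M] [AddCommMonoid N]
    [Module ℂ N] {g : M → N} (hg : IsLinearMap ℂ g) {ι κ : Type*} [Fintype ι] [Fintype κ]
    (f : ι → κ → M) : g (∑ i, ∑ j, f i j) = ∑ i, ∑ j, g (f i j) := by
  show IsLinearMap.mk' g hg (∑ i, ∑ j, f i j) = _
  rw [map_sum]
  exact Finset.sum_congr rfl fun i _ => map_sum (IsLinearMap.mk' g hg) (f i) Finset.univ

end Helpers2

/-- Proposition 2.3(1): for a finite set of nc points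
`Ω = {Z 0, …, Z (Np-1)}` with intertwining algebra `S = interAlg Z`, a graded (linear)
kernel `K` on `Ω` is a noncommutative kernel iff the associated block map `φ_K` is an
`(S,S^*)`-bimodule map; conversely every `(S,S^*)`-bimodule map `φ` equals `φ_K` for a
uniquely determined noncommutative kernel `K` on `Ω`. -/
theorem statement1 {V : Type*} [AddCommGroup V] [Module ℂ V]
    {A : Type*} [CStarAlgebra A]
    {Y : Type*} [NormedAddCommGroup Y] [InnerProductSpace ℂ Y] [CompleteSpace Y]
    {Np : ℕ} (d : Fin Np → ℕ) (Z : ∀ i : Fin Np, Matrix (Fin (d i)) (Fin (d i)) V) :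
    (∀ K : KernelIx d A (Y →L[ℂ] Y), GradedLinearIx K →
        (IsNCKernelIx Z K ↔ IsBimod (interAlg Z) (phiK K))) ∧
    (∀ φ : Matrix (BIx d) (BIx d) A →ₗ[ℂ] Matrix (BIx d) (BIx d) (Y →L[ℂ] Y),
        IsBimod (interAlg Z) ⇑φ →
        ∃! K : KernelIx d A (Y →L[ℂ] Y),
          (GradedLinearIx K ∧ IsNCKernelIx Z K) ∧ phiK K = ⇑φ) := by
  constructor
  · intro K hK
    constructor
    · -- nc kernel → bimodule map
      intro hNC α hα β hβ P
      refine Matrix.ext fun x y => ?_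
      obtain ⟨i, a⟩ := x
      obtain ⟨j, b⟩ := y
      show K i j (blkOf i j (sandwich α P β)) a b
          = blkOf i j (sandwich α (phiK K P) β) a b
      rw [sandwich_dec α β P i j, sandwich_dec α β (phiK K P) i j,
        map_sum_sum (hK i j)]
      refine congrFun (congrFun ?_ a) b
      refine Finset.sum_congr rfl fun i' _ => Finset.sum_congr rfl fun j' _ => ?_
      rw [blkOf_phiK]
      exact (hNC i' i j' j (blkOf i i' α) (blkOf j j' β)
        (blk_intertwine Z hα i i') (blk_intertwine Z hβ j j') (blkOf i' j' P)).symm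
    · -- bimodule map → nc kernel
      intro hB i i' j j' α β h1 h2 P
      have hb := hB _ (emb_mem_interAlg Z α h1) _ (emb_mem_interAlg Z β h2) (emb i j P)
      rw [sandwich_emb, blkOf_emb] at hb
      rw [sandwich_emb, blkOf_phiK, blkOf_emb] at hb
      refine Matrix.ext fun a b => ?_
      calc sandwich α (K i j P) β a b
          = emb i' j' (sandwich α (K i j P) β) ⟨i', a⟩ ⟨j', b⟩ := (emb_apply _ _ _ _ _).symm
        _ = phiK K (emb i' j' (sandwich α P β)) ⟨i', a⟩ ⟨j', b⟩ := by rw [hb]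
        _ = K i' j' (sandwich α P β) a b := phiK_emb K i' j' _ a b
  · intro φ hφ
    set K : KernelIx d A (Y →L[ℂ] Y) := fun i j P => blkOf i j (φ (emb i j P)) with hKdef
    have hlin : GradedLinearIx K := by
      intro i j
      constructor
      · intro P Q
        show blkOf i j (φ (emb i j (P + Q))) = _
        rw [emb_add, map_add, blkOf_add]
      · intro c P
        show blkOf i j (φ (emb i j (c • P))) = _
        rw [emb_smul, map_smul, blkOf_smul]
    have hphiK : phiK K = ⇑φ := by
      funext P
      refine Matrix.ext fun x y => ?_
      obtain ⟨i, a⟩ := x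
      obtain ⟨j, b⟩ := y
      show blkOf i j (φ (emb i j (blkOf i j P))) a b = φ P ⟨i, a⟩ ⟨j, b⟩
      have h1 : emb i j (blkOf i j P) = sandwich (emb i i 1) P (emb j j 1) := by
        rw [sandwich_emb, sandwich_one_one]
      rw [h1, hφ _ (proj_mem Z i) _ (proj_mem Z j) P, sandwich_emb, sandwich_one_one,
        blkOf_emb]
      rfl
    have hNC : IsNCKernelIx Z K := by
      intro i i' j j' α β h1 h2 P
      have hb := hφ _ (emb_mem_interAlg Z α h1) _ (emb_mem_interAlg Z β h2) (emb i j P)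
      rw [sandwich_emb, blkOf_emb, sandwich_emb] at hb
      show sandwich α (K i j P) β = blkOf i' j' (φ (emb i' j' (sandwich α P β)))
      rw [hb, blkOf_emb]
    refine ⟨K, ⟨⟨hlin, hNC⟩, hphiK⟩, ?_⟩
    rintro K' ⟨⟨hlin', hNC'⟩, hphiK'⟩
    funext i j P
    refine Matrix.ext fun a b => ?_
    calc K' i j P a b = phiK K' (emb i j P) ⟨i, a⟩ ⟨j, b⟩ := (phiK_emb K' i j P a b).symm
      _ = φ (emb i j P) ⟨i, a⟩ ⟨j, b⟩ := by rw [hphiK']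
      _ = phiK K (emb i j P) ⟨i, a⟩ ⟨j, b⟩ := by rw [hphiK]
      _ = K i j P a b := phiK_emb K i j P a b


end NCK

end
end

section
/- Let S be a subalgebra of ℂ^{M×M}, A a unital C*-algebra, Y a Hilbert space, and let φ : A^{M×M} → L(Y^M) be a completely positive map admitting a Stinespring representation φ(P) = V π(P) V*, where π : A^{M×M} → L(X) is a unital *-representation on a Hilbert space X and V ∈ L(X, Y^M). Then φ is an (S,S*)-bimodule map if and only if π(β*·1_A) V* = V* L_{β*} for all β ∈ S, equivalently L_α V = V π(α·1_A) for all α ∈ S. Here α·1_A ∈ A^{M×M} denotes the scalar matrix α with entries multiplied by the unit of A, and L_α ∈ L(Y^M) denotes multiplication by α. -/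
open scoped ComplexOrder Matrix

noncomputable section

namespace NCK

variable {Y : Type*} [NormedAddCommGroup Y] [InnerProductSpace ℂ Y]

section Aux

variable {M : ℕ} {A : Type*} [Ring A] [StarRing A] [Algebra ℂ A] [StarModule ℂ A]

lemma matC_mul (α β : Matrix (Fin M) (Fin M) ℂ) :
    matC A (α * β) = matC A α * matC A β := Matrix.map_mul

lemma matC_one : matC A (1 : Matrix (Fin M) (Fin M) ℂ) = 1 :=
  Matrix.map_one _ (map_zero _) (map_one _)

lemma matC_conjTranspose (α : Matrix (Fin M) (Fin M) ℂ) :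
    matC A (αᴴ) = (matC A α)ᴴ :=
  Matrix.conjTranspose_map _ (fun a => (algebraMap_star_comm (A := A) a))

lemma sandwich_eq (α β : Matrix (Fin M) (Fin M) ℂ) (P : Matrix (Fin M) (Fin M) A) :
    sandwich α P β = matC A α * P * matC A βᴴ := by
  ext i j
  simp only [sandwich, mulC, cMul, Matrix.of_apply, Matrix.mul_apply, matC, Matrix.map_apply,
    Algebra.smul_def]
  exact Finset.sum_congr rfl fun l _ => (Algebra.commutes _ _)

lemma sandwich_apply_s3 {B : Type*} [AddCommMonoid B] [Module ℂ B]
    (α β : Matrix (Fin M) (Fin M) ℂ) (Q : Matrix (Fin M) (Fin M) B) (i j : Fin M) :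
    sandwich α Q β i j = ∑ l, (starRingEnd ℂ) (β j l) • ∑ k, α i k • Q k l := by
  simp only [sandwich, mulC, cMul, Matrix.of_apply, Matrix.conjTranspose_apply,
    starRingEnd_apply]

variable {E : Type*} [NormedAddCommGroup E] [InnerProductSpace ℂ E] [CompleteSpace E]
variable {F : Type*} [NormedAddCommGroup F] [InnerProductSpace ℂ F] [CompleteSpace F]
variable {G : Type*} [NormedAddCommGroup G] [InnerProductSpace ℂ G] [CompleteSpace G]

open ContinuousLinearMap

lemma adjoint_smul' (c : ℂ) (T : F →L[ℂ] E) :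
    adjoint (c • T) = (starRingEnd ℂ c) • adjoint T :=
  map_smulₛₗ (adjoint : (F →L[ℂ] E) ≃ₗᵢ⋆[ℂ] (E →L[ℂ] F)) c T

lemma adjoint_sum' {n : ℕ} (f : Fin n → (F →L[ℂ] E)) :
    adjoint (∑ k, f k) = ∑ k, adjoint (f k) :=
  map_sum (adjoint : (F →L[ℂ] E) ≃ₗᵢ⋆[ℂ] (E →L[ℂ] F)).toLinearEquiv.toAddEquiv f Finset.univ

lemma adjoint_sub' (u w : E →L[ℂ] F) : adjoint (u - w) = adjoint u - adjoint w :=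
  map_sub (adjoint : (E →L[ℂ] F) ≃ₗᵢ⋆[ℂ] (F →L[ℂ] E)).toLinearEquiv.toAddEquiv u w

lemma eq_of_adjoint_comp_self (u w : E →L[ℂ] F)
    (h : adjoint (u - w) ∘L (u - w) = 0) : u = w := by
  have h2 := norm_adjoint_comp_self (u - w)
  rw [h, norm_zero] at h2
  have h3 : ‖u - w‖ = 0 := by nlinarith [norm_nonneg (u - w)]
  exact sub_eq_zero.mp (norm_eq_zero.mp h3)

lemma sum_comp' {n : ℕ} (f : Fin n → (F →L[ℂ] E)) (g : G →L[ℂ] F) :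
    (∑ k, f k) ∘L g = ∑ k, (f k) ∘L g := by
  ext y; simp [ContinuousLinearMap.sum_apply]

lemma comp_sum' {n : ℕ} (f : F →L[ℂ] E) (g : Fin n → (G →L[ℂ] F)) :
    f ∘L (∑ k, g k) = ∑ k, f ∘L (g k) := by
  ext y; simp [ContinuousLinearMap.sum_apply, map_sum]

end Aux

set_option maxHeartbeats 1000000

open ContinuousLinearMap

/-- Theorem 2.4: a completely positive map
`φ(P) = V π(P) V^*` (in Stinespring form, with `V` encoded as the column of operators
`Vc i : X → Y`) is an `(S,S^*)`-bimodule map if and only if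
`π(β^* ⊗ 1_A) V^* = V^* L_{β^*}` for all `β ∈ S`, equivalently `L_α V = V π(α ⊗ 1_A)`
for all `α ∈ S`. -/
theorem statement3 {M : ℕ} (S : Subalgebra ℂ (Matrix (Fin M) (Fin M) ℂ))
    {A : Type*} [CStarAlgebra A]
    {Y : Type*} [NormedAddCommGroup Y] [InnerProductSpace ℂ Y] [CompleteSpace Y]
    {X : Type*} [NormedAddCommGroup X] [InnerProductSpace ℂ X] [CompleteSpace X]
    (π : Matrix (Fin M) (Fin M) A →⋆ₐ[ℂ] (X →L[ℂ] X)) (Vc : Fin M → (X →L[ℂ] Y))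
    (φ : Matrix (Fin M) (Fin M) A → Matrix (Fin M) (Fin M) (Y →L[ℂ] Y))
    (hrep : ∀ P, φ P = Matrix.of fun i j =>
      (Vc i) ∘L ((π P) ∘L (ContinuousLinearMap.adjoint (Vc j))))
    (hcp : IsCPMap φ) :
    (IsBimod (S : Set (Matrix (Fin M) (Fin M) ℂ)) φ ↔
      ∀ β ∈ S, ∀ j : Fin M,
        (π (matC A βᴴ)) ∘L (ContinuousLinearMap.adjoint (Vc j)) =
          ∑ k, (starRingEnd ℂ) (β j k) • (ContinuousLinearMap.adjoint (Vc k))) ∧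
    (IsBimod (S : Set (Matrix (Fin M) (Fin M) ℂ)) φ ↔
      ∀ α ∈ S, ∀ i : Fin M,
        (∑ j, α i j • Vc j) = (Vc i) ∘L (π (matC A α))) := by
  classical
  have hπstar : ∀ Q : Matrix (Fin M) (Fin M) A, adjoint (π Q) = π Qᴴ := fun Q => by
    rw [← ContinuousLinearMap.star_eq_adjoint, ← map_star, Matrix.star_eq_conjTranspose]
  have hφ1 : ∀ k l : Fin M, φ 1 k l = Vc k ∘L adjoint (Vc l) := fun k l => by
    rw [hrep]
    simp [ContinuousLinearMap.one_def, ContinuousLinearMap.id_comp]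
  -- Bimod → condA
  have key1 : IsBimod (S : Set (Matrix (Fin M) (Fin M) ℂ)) φ →
      ∀ β ∈ S, ∀ j : Fin M,
        (π (matC A βᴴ)) ∘L (adjoint (Vc j)) =
          ∑ k, (starRingEnd ℂ) (β j k) • (adjoint (Vc k)) := by
    intro hb β hβ j
    set u : Y →L[ℂ] X := (π (matC A βᴴ)) ∘L (adjoint (Vc j)) with hu
    set w : Y →L[ℂ] X := ∑ k, (starRingEnd ℂ) (β j k) • (adjoint (Vc k)) with hw
    have hau : adjoint u = Vc j ∘L π (matC A β) := by
      rw [hu, adjoint_comp, adjoint_adjoint, hπstar, ← matC_conjTranspose,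
        Matrix.conjTranspose_conjTranspose]
    have haw : adjoint w = ∑ k, β j k • Vc k := by
      rw [hw, adjoint_sum']
      simp [adjoint_smul', adjoint_adjoint, Complex.conj_conj]
    have h_uu : adjoint u ∘L u =
        ∑ l, (starRingEnd ℂ) (β j l) • ∑ k, β j k • φ 1 k l := by
      have e1 : sandwich β (1 : Matrix (Fin M) (Fin M) A) β = matC A (β * βᴴ) := by
        rw [sandwich_eq, mul_one, matC_mul]
      have e2 := hb β hβ β hβ 1
      rw [e1] at e2
      have e3 : adjoint u ∘L u = φ (matC A (β * βᴴ)) j j := by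
        rw [hau, hu, hrep]
        simp only [Matrix.of_apply]
        rw [matC_mul, map_mul, ContinuousLinearMap.mul_def]
        simp only [ContinuousLinearMap.comp_assoc]
      rw [e3, e2, sandwich_apply_s3]
    have h_uw : adjoint u ∘L w =
        ∑ l, (starRingEnd ℂ) (β j l) • ∑ k, β j k • φ 1 k l := by
      have e1 : sandwich β (1 : Matrix (Fin M) (Fin M) A) (1 : Matrix (Fin M) (Fin M) ℂ)
          = matC A β := by
        rw [sandwich_eq, mul_one, Matrix.conjTranspose_one, matC_one, mul_one]
      have e2 := hb β hβ 1 (one_mem S) 1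
      rw [e1] at e2
      have e3 : ∀ l, φ (matC A β) j l = ∑ k, β j k • φ 1 k l := by
        intro l
        rw [e2, sandwich_apply_s3]
        simp [Matrix.one_apply]
      rw [hau, hw, comp_sum']
      refine Finset.sum_congr rfl fun l _ => ?_
      rw [ContinuousLinearMap.comp_smul]
      congr 1
      rw [← e3 l, hrep]
      simp only [Matrix.of_apply, ContinuousLinearMap.comp_assoc]
    have h_ww : adjoint w ∘L w =
        ∑ l, (starRingEnd ℂ) (β j l) • ∑ k, β j k • φ 1 k l := by
      rw [haw, hw, sum_comp']
      simp only [ContinuousLinearMap.smul_comp, comp_sum', ContinuousLinearMap.comp_smul,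
        Finset.smul_sum, hφ1]
      rw [Finset.sum_comm]
      exact Finset.sum_congr rfl fun l _ => Finset.sum_congr rfl fun k _ => smul_comm _ _ _
    have h_wu : adjoint w ∘L u =
        ∑ l, (starRingEnd ℂ) (β j l) • ∑ k, β j k • φ 1 k l := by
      have h := congrArg adjoint h_uw
      rw [adjoint_comp, adjoint_adjoint] at h
      rw [h, ← h_ww, adjoint_comp, adjoint_adjoint]
    apply eq_of_adjoint_comp_self
    rw [adjoint_sub', ContinuousLinearMap.sub_comp, ContinuousLinearMap.comp_sub,
      ContinuousLinearMap.comp_sub, h_uu, h_uw, h_wu, h_ww]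
    simp
  -- condA → condB
  have key2 : (∀ β ∈ S, ∀ j : Fin M,
        (π (matC A βᴴ)) ∘L (adjoint (Vc j)) =
          ∑ k, (starRingEnd ℂ) (β j k) • (adjoint (Vc k))) →
      ∀ α ∈ S, ∀ i : Fin M, (∑ j, α i j • Vc j) = Vc i ∘L π (matC A α) := by
    intro hA α hα i
    have h := congrArg adjoint (hA α hα i)
    rw [adjoint_comp, adjoint_adjoint, hπstar, ← matC_conjTranspose,
      Matrix.conjTranspose_conjTranspose, adjoint_sum'] at h
    simp only [adjoint_smul', adjoint_adjoint, Complex.conj_conj] at h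
    exact h.symm
  -- condB → condA
  have key3 : (∀ α ∈ S, ∀ i : Fin M, (∑ j, α i j • Vc j) = Vc i ∘L π (matC A α)) →
      ∀ β ∈ S, ∀ j : Fin M,
        (π (matC A βᴴ)) ∘L (adjoint (Vc j)) =
          ∑ k, (starRingEnd ℂ) (β j k) • (adjoint (Vc k)) := by
    intro hB β hβ j
    have h := congrArg adjoint (hB β hβ j)
    rw [adjoint_sum', adjoint_comp, hπstar, ← matC_conjTranspose] at h
    simp only [adjoint_smul'] at h
    exact h.symm
  -- condA → Bimod
  have key4 : (∀ β ∈ S, ∀ j : Fin M,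
        (π (matC A βᴴ)) ∘L (adjoint (Vc j)) =
          ∑ k, (starRingEnd ℂ) (β j k) • (adjoint (Vc k))) →
      IsBimod (S : Set (Matrix (Fin M) (Fin M) ℂ)) φ := by
    intro hA α hα β hβ P
    have hB := key2 hA
    ext i j
    rw [hrep (sandwich α P β), Matrix.of_apply, hrep P, sandwich_eq, map_mul, map_mul,
      ContinuousLinearMap.mul_def, ContinuousLinearMap.mul_def, sandwich_apply_s3]
    simp only [Matrix.of_apply, ContinuousLinearMap.comp_assoc]
    rw [hA β hβ j, ← ContinuousLinearMap.comp_assoc, ← hB α hα i]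
    simp only [sum_comp', ContinuousLinearMap.smul_comp, comp_sum',
      ContinuousLinearMap.comp_smul, Finset.smul_sum]
  exact ⟨⟨key1, fun h => key4 h⟩, ⟨fun h => key2 (key1 h), fun h => key4 (key3 h)⟩⟩

end NCK

end
end

section
/- Let S be a subalgebra of ℂ^{M×M} and let 𝕊 ⊆ A^{M×M} be an operator system (a unital self-adjoint linear subspace) which is also an (S,S*)-sub-bimodule of A^{M×M} (i.e., α·P·β* ∈ 𝕊 for all P ∈ 𝕊 and α, β ∈ S). Suppose φ₀ : 𝕊 → L(Y^M) is a completely positive map satisfying φ₀(α·P·β*) = L_α φ₀(P) L_{β*} for all α, β ∈ S and P ∈ 𝕊. Then any completely positive map φ : A^{M×M} → L(Y^M) extending φ₀ (φ(P) = φ₀(P) for P ∈ 𝕊) is an (S,S*)-bimodule map on all of A^{M×M}. -/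
open scoped ComplexOrder Matrix

noncomputable section

namespace NCK

variable {Y : Type*} [NormedAddCommGroup Y] [InnerProductSpace ℂ Y]

section Aux

variable {M : ℕ} {Y : Type*} [NormedAddCommGroup Y] [InnerProductSpace ℂ Y]

/-- The total sesquilinear form of an operator matrix. -/
def Gop (T : Matrix (Fin M) (Fin M) (Y →L[ℂ] Y)) (u v : Fin M → Y) : ℂ :=
  ∑ a, ∑ b, inner ℂ (u a) (T a b (v b))

/-- The conjugate-transposed action of a scalar matrix on a tuple of vectors. -/
def tv (γ : Matrix (Fin M) (Fin M) ℂ) (u : Fin M → Y) : Fin M → Y :=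
  fun c => ∑ a, (starRingEnd ℂ) (γ a c) • u a

lemma tv_one (u : Fin M → Y) : tv (1 : Matrix (Fin M) (Fin M) ℂ) u = u := by
  funext c
  simp [tv, Matrix.one_apply, apply_ite (starRingEnd ℂ), ite_smul]

lemma Gop_smul_right (T : Matrix (Fin M) (Fin M) (Y →L[ℂ] Y)) (u v : Fin M → Y) (t : ℂ) :
    Gop T u (t • v) = t * Gop T u v := by
  simp [Gop, inner_smul_right, Finset.mul_sum]

lemma Gop_smul_left (T : Matrix (Fin M) (Fin M) (Y →L[ℂ] Y)) (u v : Fin M → Y) (t : ℂ) :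
    Gop T (t • u) v = (starRingEnd ℂ) t * Gop T u v := by
  simp [Gop, inner_smul_left, Finset.mul_sum, mul_comm]

lemma Gop_single (T : Matrix (Fin M) (Fin M) (Y →L[ℂ] Y)) (i j : Fin M) (x y : Y) :
    Gop T (Pi.single i x) (Pi.single j y) = inner ℂ x (T i j y) := by
  simp only [Gop, Pi.single_apply]
  rw [Finset.sum_eq_single i]
  · rw [Finset.sum_eq_single j]
    · simp
    · intro b _ hb; simp [hb]
    · simp
  · intro a _ ha; simp [ha]
  · simp

lemma Gop_sandwich (γ δ : Matrix (Fin M) (Fin M) ℂ)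
    (T : Matrix (Fin M) (Fin M) (Y →L[ℂ] Y)) (u v : Fin M → Y) :
    Gop (sandwich γ T δ) u v = Gop T (tv γ u) (tv δ v) := by
  unfold Gop sandwich mulC cMul tv
  simp only [Matrix.of_apply, Matrix.conjTranspose_apply, ContinuousLinearMap.coe_sum',
    Finset.sum_apply, ContinuousLinearMap.coe_smul', Pi.smul_apply, inner_sum,
    inner_smul_right, sum_inner, inner_smul_left, map_sum, map_smul, Complex.conj_conj,
    RingHom.id_apply, smul_eq_mul, RCLike.star_def]
  simp only [Finset.mul_sum]
  have key : ∀ (f : Fin M → Fin M → Fin M → Fin M → ℂ),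
      ∑ a, ∑ b, ∑ d, ∑ c, f a b d c = ∑ c, ∑ d, ∑ b, ∑ a, f a b d c := by
    intro f
    calc ∑ a, ∑ b, ∑ d, ∑ c, f a b d c
        = ∑ a, ∑ b, ∑ c, ∑ d, f a b d c :=
          Finset.sum_congr rfl fun a _ => Finset.sum_congr rfl fun b _ => Finset.sum_comm
      _ = ∑ a, ∑ c, ∑ b, ∑ d, f a b d c :=
          Finset.sum_congr rfl fun a _ => Finset.sum_comm
      _ = ∑ c, ∑ a, ∑ b, ∑ d, f a b d c := Finset.sum_comm
      _ = ∑ c, ∑ b, ∑ a, ∑ d, f a b d c :=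
          Finset.sum_congr rfl fun c _ => Finset.sum_comm
      _ = ∑ c, ∑ b, ∑ d, ∑ a, f a b d c :=
          Finset.sum_congr rfl fun c _ => Finset.sum_congr rfl fun b _ => Finset.sum_comm
      _ = ∑ c, ∑ d, ∑ b, ∑ a, f a b d c :=
          Finset.sum_congr rfl fun c _ => Finset.sum_comm
  rw [key]

end Aux

section Mat
variable {M : ℕ} {A : Type*} [Ring A] [StarRing A] [Algebra ℂ A] [StarModule ℂ A]

lemma sandwich_eq_mul (γ δ : Matrix (Fin M) (Fin M) ℂ) (P : Matrix (Fin M) (Fin M) A) :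
    sandwich γ P δ = matC A γ * P * (matC A δ)ᴴ := by
  ext i k
  simp only [sandwich, mulC, cMul, Matrix.of_apply, Matrix.conjTranspose_apply,
    Finset.smul_sum]
  simp only [matC, Matrix.mul_apply, Matrix.map_apply, Finset.sum_mul]
  refine Finset.sum_congr rfl fun c _ => Finset.sum_congr rfl fun j _ => ?_
  rw [Matrix.conjTranspose_apply, Matrix.map_apply, Algebra.smul_def, Algebra.smul_def,
    ← algebraMap_star_comm, Algebra.commutes, mul_assoc]

lemma sandwich_one_one_s4 (β : Matrix (Fin M) (Fin M) ℂ) :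
    sandwich β (1 : Matrix (Fin M) (Fin M) A) 1 = matC A β := by
  rw [sandwich_eq_mul, matC_one, Matrix.conjTranspose_one, mul_one, mul_one]

end Mat


section Gram
variable {M : ℕ} {A : Type*} [NonUnitalSemiring A] [StarRing A]
  {Y : Type*} [NormedAddCommGroup Y] [InnerProductSpace ℂ Y]

lemma gram_pos (φ : Matrix (Fin M) (Fin M) A → Matrix (Fin M) (Fin M) (Y →L[ℂ] Y))
    (hcp : IsCPMap φ) (k : ℕ) (X : Fin k → Matrix (Fin M) (Fin M) A)
    (u : Fin k → Fin M → Y) :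
    0 ≤ ∑ i, ∑ j, Gop (φ ((X i)ᴴ * X j)) (u i) (u j) := by
  rcases Nat.eq_zero_or_pos k with hk | hk
  · subst hk; simp
  have i0 : Fin k := ⟨0, hk⟩
  have hpos : MatPos (Matrix.of fun i j : Fin k => (X i)ᴴ * X j) := by
    refine ⟨Matrix.of fun i j : Fin k => if i = i0 then X j else 0, ?_⟩
    ext i j
    simp only [Matrix.of_apply, Matrix.mul_apply, Matrix.conjTranspose_apply]
    rw [Finset.sum_eq_single i0]
    · simp [Matrix.star_eq_conjTranspose, Matrix.mul_apply, Matrix.conjTranspose_apply]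
    · intro l _ hl; simp [hl]
    · simp
  have := hcp k (Matrix.of fun i j : Fin k => (X i)ᴴ * X j) hpos u
  simpa [Gop] using this

end Gram


section Herm
variable {M : ℕ} {A : Type*} [Semiring A] [StarRing A]
  {Y : Type*} [NormedAddCommGroup Y] [InnerProductSpace ℂ Y]

lemma gram_pos_diag (φ : Matrix (Fin M) (Fin M) A → Matrix (Fin M) (Fin M) (Y →L[ℂ] Y))
    (hcp : IsCPMap φ) (X : Matrix (Fin M) (Fin M) A) (w : Fin M → Y) :
    0 ≤ Gop (φ (Xᴴ * X)) w w := by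
  have := gram_pos φ hcp 1 ![X] ![w]
  simpa using this

lemma gop_herm (φ : Matrix (Fin M) (Fin M) A → Matrix (Fin M) (Fin M) (Y →L[ℂ] Y))
    (hcp : IsCPMap φ) (P : Matrix (Fin M) (Fin M) A) (u v : Fin M → Y) :
    Gop (φ Pᴴ) v u = (starRingEnd ℂ) (Gop (φ P) u v) := by
  have d1 : 0 ≤ Gop (φ ((1 : Matrix (Fin M) (Fin M) A)ᴴ * 1)) u u := gram_pos_diag φ hcp 1 u
  have d2 : 0 ≤ Gop (φ (Pᴴ * P)) v v := gram_pos_diag φ hcp P v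
  have h1 := gram_pos φ hcp 2 ![1, P] ![u, v]
  have h2 := gram_pos φ hcp 2 ![1, P] ![u, Complex.I • v]
  simp only [Fin.sum_univ_two, Matrix.cons_val_zero, Matrix.cons_val_one, Matrix.head_cons,
    Matrix.conjTranspose_one, one_mul, mul_one, Gop_smul_right, Gop_smul_left,
    Complex.conj_I] at h1 h2
  have e1 := (Complex.le_def.mp h1).2
  have e2 := (Complex.le_def.mp h2).2
  have f1 := (Complex.le_def.mp d1).2
  have f2 := (Complex.le_def.mp d2).2
  rw [Matrix.conjTranspose_one, one_mul] at f1
  simp only [Complex.zero_im, Complex.add_im, Complex.mul_im, Complex.I_re, Complex.I_im,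
    Complex.neg_im, Complex.neg_re, Complex.mul_re] at e1 e2 f1 f2
  apply Complex.ext
  · simp only [Complex.conj_re]; linarith
  · simp only [Complex.conj_im]; linarith

end Herm


section Main
variable {M : ℕ} {A : Type*} [Semiring A] [StarRing A]
  {Y : Type*} [NormedAddCommGroup Y] [InnerProductSpace ℂ Y]

lemma gop_rightmul (φ : Matrix (Fin M) (Fin M) A → Matrix (Fin M) (Fin M) (Y →L[ℂ] Y))
    (hcp : IsCPMap φ) (b : Matrix (Fin M) (Fin M) A) (v w : Fin M → Y)
    (hbb : Gop (φ (b * bᴴ)) v v = Gop (φ (1 : Matrix (Fin M) (Fin M) A)) w w)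
    (hb : Gop (φ b) v w = Gop (φ (1 : Matrix (Fin M) (Fin M) A)) w w)
    (P : Matrix (Fin M) (Fin M) A) (u : Fin M → Y) :
    Gop (φ (P * bᴴ)) u v = Gop (φ P) u w := by
  set g := Gop (φ (1 : Matrix (Fin M) (Fin M) A)) w w with hgdef
  have hg : 0 ≤ g := by
    have := gram_pos_diag φ hcp 1 w
    rwa [Matrix.conjTranspose_one, one_mul] at this
  have hgreal : (starRingEnd ℂ) g = g := by
    rw [Complex.conj_eq_iff_im]
    exact ((Complex.le_def.mp hg).2).symm
  set Gpb := Gop (φ (P * bᴴ)) u v with hGpb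
  set Gp := Gop (φ P) u w with hGp
  have hA' : Gop (φ (b * Pᴴ)) v u = (starRingEnd ℂ) Gpb := by
    have := gop_herm φ hcp (P * bᴴ) u v
    rwa [Matrix.conjTranspose_mul, Matrix.conjTranspose_conjTranspose] at this
  have hB' : Gop (φ Pᴴ) w u = (starRingEnd ℂ) Gp := gop_herm φ hcp P u w
  have hC' : Gop (φ bᴴ) w v = (starRingEnd ℂ) g := by
    rw [gop_herm φ hcp b v w, hb]
  set q := Gop (φ (P * Pᴴ)) u u with hq'
  have hq : 0 ≤ q := by
    have := gram_pos_diag φ hcp Pᴴ u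
    rwa [Matrix.conjTranspose_conjTranspose] at this
  rw [← sub_eq_zero]
  by_contra hc0
  set c := Gpb - Gp with hc
  have hnc : 0 < Complex.normSq c := Complex.normSq_pos.mpr hc0
  set r : ℝ := (q.re + 1) / (2 * Complex.normSq c) with hr
  set t : ℂ := -(r : ℂ) * (starRingEnd ℂ) c with ht
  have hcc : (starRingEnd ℂ) c = (starRingEnd ℂ) Gpb - (starRingEnd ℂ) Gp := by
    rw [hc, map_sub]
  have key := gram_pos φ hcp 3 ![Pᴴ, bᴴ, 1] ![u, t • v, (-t) • w]
  have expand : ∑ i, ∑ j,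
      Gop (φ ((![Pᴴ, bᴴ, (1 : Matrix (Fin M) (Fin M) A)] i)ᴴ
        * ![Pᴴ, bᴴ, (1 : Matrix (Fin M) (Fin M) A)] j)) (![u, t • v, (-t) • w] i)
        (![u, t • v, (-t) • w] j)
      = q + t * c + (starRingEnd ℂ) t * (starRingEnd ℂ) c := by
    simp only [Fin.sum_univ_three, Matrix.cons_val_zero, Matrix.cons_val_one,
      Matrix.head_cons, Matrix.cons_val_two, Matrix.tail_cons,
      Matrix.conjTranspose_conjTranspose, Matrix.conjTranspose_one, one_mul, mul_one,
      Gop_smul_right, Gop_smul_left, map_neg, hA', hB', hC', hbb, hb,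
      ← hGpb, ← hGp, ← hgdef, ← hq']
    linear_combination (-t) * hc + (-(starRingEnd ℂ) t) * hcc
      + (-(starRingEnd ℂ) t * t) * hgreal
  rw [expand] at key
  have hmc : (starRingEnd ℂ) c * c = (Complex.normSq c : ℂ) := by
    rw [mul_comm]; exact Complex.mul_conj c
  have h1 : t * c = -((r * Complex.normSq c : ℝ) : ℂ) := by
    rw [ht, mul_assoc, hmc]; push_cast; ring
  have h2 : (starRingEnd ℂ) t * (starRingEnd ℂ) c = -((r * Complex.normSq c : ℝ) : ℂ) := by
    rw [← map_mul, h1, ← Complex.ofReal_neg, Complex.conj_ofReal]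
  rw [h1, h2] at key
  have hre := (Complex.le_def.mp key).1
  simp only [Complex.zero_re, Complex.add_re, Complex.neg_re, Complex.ofReal_re] at hre
  have hrq : r * Complex.normSq c = (q.re + 1) / 2 := by
    rw [hr]; field_simp
  rw [hrq] at hre
  linarith

end Main

/-- Corollary 2.5: if `𝕊 ⊆ A^{M×M}` is an operator system which is also
an `(S,S^*)`-sub-bimodule, `φ₀ : 𝕊 → L(Y^M)` is a completely positive `(S,S^*)`-bimodule
map, then every completely positive extension `φ : A^{M×M} → L(Y^M)` of `φ₀` is an
`(S,S^*)`-bimodule map. -/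
theorem statement4 {M : ℕ} (S : Subalgebra ℂ (Matrix (Fin M) (Fin M) ℂ))
    {A : Type*} [CStarAlgebra A]
    {Y : Type*} [NormedAddCommGroup Y] [InnerProductSpace ℂ Y] [CompleteSpace Y]
    (SS : Submodule ℂ (Matrix (Fin M) (Fin M) A))
    (hone : (1 : Matrix (Fin M) (Fin M) A) ∈ SS)
    (hstarmem : ∀ P ∈ SS, Pᴴ ∈ SS)
    (hsub : ∀ α ∈ S, ∀ β ∈ S, ∀ P ∈ SS, sandwich α P β ∈ SS)
    (φ₀ : SS →ₗ[ℂ] Matrix (Fin M) (Fin M) (Y →L[ℂ] Y))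
    (hcp₀ : ∀ (k : ℕ) (Q : Matrix (Fin k) (Fin k) SS),
        MatPos (Matrix.of fun i j => ((Q i j : Matrix (Fin M) (Fin M) A))) →
        OpMatPos2 (Matrix.of fun i j => φ₀ (Q i j)))
    (hbm₀ : ∀ α ∈ S, ∀ β ∈ S,
        ∀ (P : Matrix (Fin M) (Fin M) A) (hP : P ∈ SS) (hP' : sandwich α P β ∈ SS),
          φ₀ ⟨sandwich α P β, hP'⟩ = sandwich α (φ₀ ⟨P, hP⟩) β)
    (φ : Matrix (Fin M) (Fin M) A →ₗ[ℂ] Matrix (Fin M) (Fin M) (Y →L[ℂ] Y))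
    (hcp : IsCPMap ⇑φ)
    (hext : ∀ (P : Matrix (Fin M) (Fin M) A) (hP : P ∈ SS), φ P = φ₀ ⟨P, hP⟩) :
    IsBimod (S : Set (Matrix (Fin M) (Fin M) ℂ)) ⇑φ := by
  intro α hα β hβ P
  have hα' : α ∈ S := hα
  have hβ' : β ∈ S := hβ
  have hone' : (1 : Matrix (Fin M) (Fin M) ℂ) ∈ S := S.one_mem
  -- φ on scalar sandwiches of 1
  have hφsand : ∀ γ ∈ S, ∀ δ ∈ S,
      φ (sandwich γ (1 : Matrix (Fin M) (Fin M) A) δ) = sandwich γ (φ 1) δ := by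
    intro γ hγ δ hδ
    have hmem := hsub γ hγ δ hδ 1 hone
    rw [hext _ hmem, hbm₀ γ hγ δ hδ 1 hone hmem, hext 1 hone]
  -- right multiplication identity
  have hR : ∀ δ ∈ S, ∀ (P : Matrix (Fin M) (Fin M) A) (u v : Fin M → Y),
      Gop (φ (P * (matC A δ)ᴴ)) u v = Gop (φ P) u (tv δ v) := by
    intro δ hδ P u v
    have hbbm : matC A δ * (matC A δ)ᴴ = sandwich δ (1 : Matrix (Fin M) (Fin M) A) δ := by
      rw [sandwich_eq_mul, mul_one]
    have hbb : Gop (φ (matC A δ * (matC A δ)ᴴ)) v v = Gop (φ 1) (tv δ v) (tv δ v) := by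
      rw [hbbm, hφsand δ hδ δ hδ, Gop_sandwich]
    have hb : Gop (φ (matC A δ)) v (tv δ v) = Gop (φ 1) (tv δ v) (tv δ v) := by
      conv_lhs => rw [← sandwich_one_one_s4 (A := A) δ, hφsand δ hδ 1 hone', Gop_sandwich,
        tv_one]
    exact gop_rightmul ⇑φ hcp (matC A δ) v (tv δ v) hbb hb P u
  -- left multiplication identity
  have hL : ∀ γ ∈ S, ∀ (P : Matrix (Fin M) (Fin M) A) (u v : Fin M → Y),
      Gop (φ (matC A γ * P)) u v = Gop (φ P) (tv γ u) v := by
    intro γ hγ P u v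
    have h1 := gop_herm ⇑φ hcp (matC A γ * P) u v
    rw [Matrix.conjTranspose_mul, hR γ hγ Pᴴ v u, gop_herm ⇑φ hcp P (tv γ u) v] at h1
    exact ((starRingEnd ℂ).injective h1).symm
  -- conclude entrywise
  have hmain : ∀ u v : Fin M → Y,
      Gop (φ (sandwich α P β)) u v = Gop (sandwich α (φ P) β) u v := by
    intro u v
    rw [Gop_sandwich, sandwich_eq_mul, mul_assoc, hL α hα' _ u v, hR β hβ' P (tv α u) v]
  ext i j y
  apply ext_inner_left ℂ
  intro x
  have := hmain (Pi.single i x) (Pi.single j y)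
  rwa [Gop_single, Gop_single] at this


end NCK

end
end
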